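/- Grönwall argument for the blow-up criterion: let $y : [T/2, T) \to [0,\infty)$ be absolutely continuous satisfying $y'(t) \leq C f(t) y(t)$, where $f = f_{\leq} + f_{>}$ with $f_{\leq}(t) \leq M$ for all $t$ and $\int_{T/2}^{t} f_{>}(\tau)\,d\tau \leq \frac{\epsilon \ln 2}{C} \bar{Q}(t)$ for some $\epsilon > 0$, where $\bar{Q}(t)$ satisfies $2^{\epsilon \bar{Q}(t)} \leq A \sup_{\tau \in [T/2,t]} y(\tau)^{1/2}$ for a constant $A \geq 1$. Then $y$ is bounded on $[T/2,T)$; in fact $y(t) \leq A^2 e^{2TCM} y(T/2)^2$ for all $t \in [T/2, T)$ (assuming $y(T/2) \geq 1$ without loss of generality). -/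

import Mathlib

open MeasureTheory Set

/-- Grönwall argument for the blow-up criterion: if `y' ≤ C f y` on `[T/2, T)` with
`f = f_≤ + f_>`, `f_≤ ≤ M`, `∫_{T/2}^t f_> ≤ (ε ln 2 / C) Q̄(t)`, and
`2^{ε Q̄(t)} ≤ A sup_{[T/2,t]} y^{1/2}` with `A ≥ 1`, then (assuming `y(T/2) ≥ 1`)
`y(t) ≤ A² e^{2TCM} y(T/2)²` on `[T/2, T)`. -/
theorem stmt7 (T C ε M A : ℝ) (hT : 0 < T) (hC : 0 < C) (hε : 0 < ε) (hM : 0 ≤ M)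
    (hA : 1 ≤ A) (y d fle fgt : ℝ → ℝ) (Qbar : ℝ → ℝ)
    (hy_nonneg : ∀ t ∈ Ico (T / 2) T, 0 ≤ y t)
    (hy_deriv : ∀ t ∈ Ico (T / 2) T, HasDerivAt y (d t) t)
    (hd : ∀ t ∈ Ico (T / 2) T, d t ≤ C * (fle t + fgt t) * y t)
    (hfle_nonneg : ∀ t ∈ Ico (T / 2) T, 0 ≤ fle t)
    (hfgt_nonneg : ∀ t ∈ Ico (T / 2) T, 0 ≤ fgt t)
    (hfle : ∀ t ∈ Ico (T / 2) T, fle t ≤ M)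
    (hfgt_int : IntegrableOn fgt (Ico (T / 2) T))
    (hfgt : ∀ t ∈ Ico (T / 2) T, ∫ τ in (T / 2)..t, fgt τ ≤ ε * Real.log 2 / C * Qbar t)
    (hQbar : ∀ t ∈ Ico (T / 2) T,
      (2 : ℝ) ^ (ε * Qbar t) ≤ A * Real.sqrt (sSup (y '' Icc (T / 2) t)))
    (hy0 : 1 ≤ y (T / 2)) :
    ∀ t ∈ Ico (T / 2) T, y t ≤ A ^ 2 * Real.exp (2 * T * C * M) * (y (T / 2)) ^ 2 := by
  set a := T / 2 with ha
  set S : ℝ → ℝ := fun t => sSup (y '' Icc a t) with hS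
  -- basic facts for t in the interval
  have hsub : ∀ t ∈ Ico a T, Icc a t ⊆ Ico a T := by
    rintro t ⟨hat, htT⟩ τ ⟨h1, h2⟩
    exact ⟨h1, lt_of_le_of_lt h2 htT⟩
  have hycont : ∀ t ∈ Ico a T, ContinuousOn y (Icc a t) := fun t ht τ hτ =>
    ((hy_deriv τ (hsub t ht hτ)).continuousAt).continuousWithinAt
  have hbdd : ∀ t ∈ Ico a T, BddAbove (y '' Icc a t) := fun t ht =>
    (isCompact_Icc.image_of_continuousOn (hycont t ht)).bddAbove
  have hne : ∀ t ∈ Ico a T, (y '' Icc a t).Nonempty := fun t ht =>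
    ⟨y a, mem_image_of_mem y ⟨le_refl a, ht.1⟩⟩
  have hS1 : ∀ t ∈ Ico a T, 1 ≤ S t := fun t ht =>
    le_trans hy0 (le_csSup (hbdd t ht) (mem_image_of_mem y ⟨le_refl a, ht.1⟩))
  have hSpos : ∀ t ∈ Ico a T, 0 < S t := fun t ht => lt_of_lt_of_le one_pos (hS1 t ht)
  -- the key Grönwall bound
  have key : ∀ t ∈ Ico a T, y t ≤ y a * (Real.exp (T * C * M) * (A * Real.sqrt (S t))) := by
    intro t ht
    set E : ℝ := Real.exp (T * C * M) * (A * Real.sqrt (S t)) with hE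
    have hEpos : 0 < E := by
      apply mul_pos (Real.exp_pos _)
      exact mul_pos (lt_of_lt_of_le one_pos hA)
        (Real.sqrt_pos.mpr (hSpos t ht))
    -- for each δ > 0, y t + δ ≤ (y a + δ) * E
    have hδ : ∀ δ : ℝ, 0 < δ → y t + δ ≤ (y a + δ) * E := by
      intro δ hδpos
      have hyδpos : ∀ τ ∈ Ico a T, 0 < y τ + δ := fun τ hτ =>
        add_pos_of_nonneg_of_pos (hy_nonneg τ hτ) hδpos
      have hlog := intervalIntegral.sub_le_integral_of_hasDeriv_right_of_le
        (g := fun τ => Real.log (y τ + δ)) (g' := fun τ => d τ / (y τ + δ))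
        (φ := fun τ => C * (M + fgt τ)) (a := a) (b := t) ht.1
        ?_ ?_ ?_ ?_
      · -- exploit the integral bound
        have hint : IntervalIntegrable fgt volume a t := by
          apply (hfgt_int.mono_set ?_).intervalIntegrable
          rw [uIcc_of_le ht.1]
          exact hsub t ht
        have hval : (∫ τ in a..t, C * (M + fgt τ))
            = C * M * (t - a) + C * ∫ τ in a..t, fgt τ := by
          rw [show (fun τ => C * (M + fgt τ)) = fun τ => C * M + C * fgt τ by
              funext τ; ring]
          rw [intervalIntegral.integral_add intervalIntegrable_const (hint.const_mul C),
            intervalIntegral.integral_const, intervalIntegral.integral_const_mul]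
          rw [smul_eq_mul]; ring
        have hbound : (∫ τ in a..t, C * (M + fgt τ))
            ≤ T * C * M + Real.log 2 * (ε * Qbar t) := by
          rw [hval]
          have h1 : C * M * (t - a) ≤ T * C * M := by
            have : t - a ≤ T := by
              simp only [ha]; linarith [ht.2, hT]
            nlinarith [mul_nonneg hC.le hM]
          have h2 : C * ∫ τ in a..t, fgt τ ≤ Real.log 2 * (ε * Qbar t) := by
            have := hfgt t ht
            have h3 : C * ∫ τ in a..t, fgt τ ≤ C * (ε * Real.log 2 / C * Qbar t) :=
              mul_le_mul_of_nonneg_left this hC.le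
            calc C * ∫ τ in a..t, fgt τ ≤ C * (ε * Real.log 2 / C * Qbar t) := h3
              _ = Real.log 2 * (ε * Qbar t) := by field_simp
          linarith
        -- exponentiate
        have hexp : Real.log (y t + δ) ≤ Real.log (y a + δ) + (T * C * M
            + Real.log 2 * (ε * Qbar t)) := by linarith [le_trans hlog hbound]
        have h2pow : Real.exp (Real.log 2 * (ε * Qbar t)) = (2:ℝ) ^ (ε * Qbar t) := by
          rw [Real.rpow_def_of_pos two_pos]
        have := Real.exp_le_exp.mpr hexp
        rw [Real.exp_log (hyδpos t ht), Real.exp_add, Real.exp_add,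
          Real.exp_log (hyδpos a ⟨le_refl a, by linarith⟩)] at this
        calc y t + δ ≤ (y a + δ) * (Real.exp (T * C * M)
              * Real.exp (Real.log 2 * (ε * Qbar t))) := this
          _ ≤ (y a + δ) * E := by
              apply mul_le_mul_of_nonneg_left _ (hyδpos a ⟨le_refl a, by linarith⟩).le
              rw [hE]
              apply mul_le_mul_of_nonneg_left _ (Real.exp_pos _).le
              rw [h2pow]
              exact hQbar t ht
      · -- continuity of log (y + δ)
        apply ContinuousOn.log
        · exact (hycont t ht).add continuousOn_const
        · exact fun τ hτ => (hyδpos τ (hsub t ht hτ)).ne'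
      · -- derivative
        intro τ hτ
        have hτ' : τ ∈ Ico a T := hsub t ht ⟨hτ.1.le, hτ.2.le⟩
        exact (((hy_deriv τ hτ').add_const δ).log (hyδpos τ hτ').ne').hasDerivWithinAt
      · -- integrability of φ
        apply Integrable.const_mul
        exact (integrableOn_const measure_Icc_lt_top.ne).add
          (hfgt_int.mono_set (hsub t ht))
      · -- pointwise bound on the derivative
        intro τ hτ
        have hτ' : τ ∈ Ico a T := hsub t ht ⟨hτ.1.le, hτ.2.le⟩
        rw [div_le_iff₀ (hyδpos τ hτ')]
        calc d τ ≤ C * (fle τ + fgt τ) * y τ := hd τ hτ'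
          _ ≤ C * (M + fgt τ) * (y τ + δ) := by
            apply mul_le_mul
            · apply mul_le_mul_of_nonneg_left _ hC.le
              linarith [hfle τ hτ']
            · linarith
            · exact hy_nonneg τ hτ'
            · exact mul_nonneg hC.le (by linarith [hfgt_nonneg τ hτ'])
    -- let δ → 0
    apply le_of_forall_pos_le_add
    intro ε' hε'
    have h1 := hδ (ε' / E) (div_pos hε' hEpos)
    have h2 : (y a + ε' / E) * E = y a * E + ε' := by
      rw [add_mul, div_mul_cancel₀ _ hEpos.ne']
    have h3 : 0 < ε' / E := div_pos hε' hEpos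
    linarith
  -- self-improving step
  set K : ℝ := y a * (Real.exp (T * C * M) * A) with hK
  have hKpos : 0 < K := by
    apply mul_pos (by linarith)
    exact mul_pos (Real.exp_pos _) (by linarith)
  have hSK : ∀ t ∈ Ico a T, S t ≤ K * Real.sqrt (S t) := by
    intro t ht
    apply csSup_le (hne t ht)
    rintro v ⟨τ, hτ, rfl⟩
    have hτ' : τ ∈ Ico a T := hsub t ht hτ
    have h1 := key τ hτ'
    have h2 : Real.sqrt (S τ) ≤ Real.sqrt (S t) := by
      apply Real.sqrt_le_sqrt
      apply csSup_le_csSup (hbdd t ht) (hne τ hτ')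
      exact image_mono (Icc_subset_Icc_right hτ.2)
    calc y τ ≤ y a * (Real.exp (T * C * M) * (A * Real.sqrt (S τ))) := h1
      _ = K * Real.sqrt (S τ) := by rw [hK]; ring
      _ ≤ K * Real.sqrt (S t) := mul_le_mul_of_nonneg_left h2 hKpos.le
  intro t ht
  have hsqrt : Real.sqrt (S t) ≤ K := by
    have h1 := hSK t ht
    have h2 : Real.sqrt (S t) * Real.sqrt (S t) = S t :=
      Real.mul_self_sqrt (hSpos t ht).le
    have h3 : 0 < Real.sqrt (S t) := Real.sqrt_pos.mpr (hSpos t ht)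
    nlinarith
  have hyS : y t ≤ S t := le_csSup (hbdd t ht) (mem_image_of_mem y ⟨ht.1, le_refl t⟩)
  have hfin : y t ≤ K * K := by
    calc y t ≤ S t := hyS
      _ ≤ K * Real.sqrt (S t) := hSK t ht
      _ ≤ K * K := mul_le_mul_of_nonneg_left hsqrt hKpos.le
  have hKsq : K * K = A ^ 2 * Real.exp (2 * T * C * M) * (y a) ^ 2 := by
    rw [hK, show (2:ℝ) * T * C * M = T * C * M + T * C * M by ring, Real.exp_add]
    ring
  calc y t ≤ K * K := hfin
    _ = A ^ 2 * Real.exp (2 * T * C * M) * (y a) ^ 2 := hKsq
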